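/- Let G be a connected chordal graph that is not complete and S an inclusion-minimal minimal vertex separator, with connected components Γ_1,...,Γ_M of G(V\S). Then for every clique tree T of G, the leaves of T meet the maximal cliques of at least two distinct components: there exist m ≠ m' such that some leaf of T lies in C(Γ_m ∪ S) and some leaf of T lies in C(Γ_{m'} ∪ S). -/

import Mathlib

namespace Chordal

variable {V : Type*} [Fintype V]

/-- A closed walk has a chord: an edge of `G` joining two support vertices that is
not an edge of the walk. -/
def HasChord (G : SimpleGraph V) {u : V} (c : G.Walk u u) : Prop :=
  ∃ v w, v ∈ c.support ∧ w ∈ c.support ∧ G.Adj v w ∧ s(v, w) ∉ c.edges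

/-- A graph is chordal if every cycle of length at least 4 has a chord. -/
def IsChordal (G : SimpleGraph V) : Prop :=
  ∀ ⦃u : V⦄ (c : G.Walk u u), c.IsCycle → 4 ≤ c.length → HasChord G c

/-- A maximal clique of `G`. -/
def IsMaxClique (G : SimpleGraph V) (s : Set V) : Prop :=
  G.IsClique s ∧ ∀ t : Set V, G.IsClique t → s ⊆ t → s = t

/-- A maximal clique of the induced subgraph `G(W)`. -/
def IsMaxCliqueOn (G : SimpleGraph V) (W s : Set V) : Prop :=
  s ⊆ W ∧ G.IsClique s ∧ ∀ t : Set V, t ⊆ W → G.IsClique t → s ⊆ t → s = t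

/-- There is a walk from `u` to `w` staying inside `W` and avoiding `S`. -/
def ReachWithin (G : SimpleGraph V) (W S : Set V) (u w : V) : Prop :=
  ∃ p : G.Walk u w, ∀ x ∈ p.support, x ∈ W ∧ x ∉ S

/-- `S` separates `u` from `w` in the induced subgraph `G(W)`. -/
def SeparatesOn (G : SimpleGraph V) (W S : Set V) (u w : V) : Prop :=
  u ∈ W ∧ w ∈ W ∧ u ∉ S ∧ w ∉ S ∧ u ≠ w ∧ ¬ ReachWithin G W S u w

/-- `S` is a minimal vertex separator of the induced subgraph `G(W)`:
for some pair `u, w` it is an inclusion-minimal set separating `u` from `w`. -/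
def IsMinSeparatorOn (G : SimpleGraph V) (W S : Set V) : Prop :=
  S ⊆ W ∧ ∃ u w, SeparatesOn G W S u w ∧ ∀ S' ⊂ S, ¬ SeparatesOn G W S' u w

/-- `S` is a minimal vertex separator of `G`. -/
def IsMinSeparator (G : SimpleGraph V) (S : Set V) : Prop :=
  IsMinSeparatorOn G Set.univ S

/-- `S` is inclusion-minimal among the minimal vertex separators of `G`. -/
def IsInclMinSeparator (G : SimpleGraph V) (S : Set V) : Prop :=
  IsMinSeparator G S ∧ ∀ S' : Set V, IsMinSeparator G S' → S' ⊆ S → S' = S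

/-- `Γ` is a connected component of `G(V \ S)`. -/
def IsCompOutside (G : SimpleGraph V) (S Γ : Set V) : Prop :=
  ∃ u, u ∉ S ∧ Γ = {w | ReachWithin G Set.univ S u w}

/-- A vertex is simplicial if its neighborhood is a clique. -/
def IsSimplicial (G : SimpleGraph V) (v : V) : Prop :=
  G.IsClique (G.neighborSet v)

/-- The simplicial component of a clique `C`: the simplicial vertices of `G` in `C`. -/
def Simp (G : SimpleGraph V) (C : Set V) : Set V :=
  {v ∈ C | IsSimplicial G v}

/-- The non-simplicial component of a clique `C`. -/
def Sep (G : SimpleGraph V) (C : Set V) : Set V :=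
  C \ Simp G C

/-- `C` is a boundary clique (simply separated clique): a maximal clique such that
`Sep C = C ∩ C'` for some other maximal clique `C'`. -/
def IsBoundaryClique (G : SimpleGraph V) (C : Set V) : Prop :=
  IsMaxClique G C ∧ ∃ C' : Set V, IsMaxClique G C' ∧ C' ≠ C ∧ Sep G C = C ∩ C'

/-- The induced subgraph on `W`, kept on the same vertex type. -/
def restrictS (G : SimpleGraph V) (W : Set V) : SimpleGraph V where
  Adj u v := G.Adj u v ∧ u ∈ W ∧ v ∈ W
  symm := ⟨fun u v ⟨h, hu, hv⟩ => ⟨h.symm, hv, hu⟩⟩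
  loopless := ⟨fun u ⟨h, _, _⟩ => G.loopless.irrefl u h⟩

/-- The vertex subset `A` induces a connected subgraph of `T`. -/
def ConnOn {α : Type*} (T : SimpleGraph α) (A : Set α) : Prop :=
  A.Nonempty ∧ ∀ u ∈ A, ∀ v ∈ A, ∃ p : T.Walk u v, ∀ x ∈ p.support, x ∈ A

/-- The induced subgraph `G(W)` is complete. -/
def CompleteOn (G : SimpleGraph V) (W : Set V) : Prop :=
  ∀ u ∈ W, ∀ v ∈ W, u ≠ v → G.Adj u v

/-- A clique tree of `G`: a tree on the maximal cliques of `G` satisfying the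
junction property. -/
def IsCliqueTree (G : SimpleGraph V) (T : SimpleGraph {s : Set V // IsMaxClique G s}) : Prop :=
  T.IsTree ∧ ∀ (C₁ C₂ : {s : Set V // IsMaxClique G s}) (p : T.Walk C₁ C₂), p.IsPath →
    ∀ C₃ ∈ p.support, C₁.val ∩ C₂.val ⊆ C₃.val

/-- A leaf (endpoint) of a graph: a vertex with exactly one neighbor. -/
def IsLeaf {α : Type*} (T : SimpleGraph α) (a : α) : Prop :=
  ∃! b, T.Adj a b

/-- The union of the cliques preceding position `k` in a sequence. -/
def prefUnion {K : ℕ} (f : Fin K → Set V) (k : Fin K) : Set V :=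
  {v | ∃ j, j < k ∧ v ∈ f j}

/-- A perfect sequence of the maximal cliques of the induced subgraph `G(W)`:
an enumeration of the maximal cliques of `G(W)` with the running intersection property. -/
def IsPerfectSeqOn (G : SimpleGraph V) (W : Set V) {K : ℕ} (f : Fin K → Set V) : Prop :=
  Function.Injective f ∧ (∀ s : Set V, IsMaxCliqueOn G W s ↔ ∃ k, f k = s) ∧
  ∀ k : Fin K, 0 < (k : ℕ) →
    G.IsClique (prefUnion f k ∩ f k) ∧ ∃ k' : Fin K, k' < k ∧ prefUnion f k ∩ f k ⊆ f k'

/-- A perfect sequence of the maximal cliques of `G`. -/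
def IsPerfectSeq (G : SimpleGraph V) {K : ℕ} (f : Fin K → Set V) : Prop :=
  Function.Injective f ∧ (∀ s : Set V, IsMaxClique G s ↔ ∃ k, f k = s) ∧
  ∀ k : Fin K, 0 < (k : ℕ) →
    G.IsClique (prefUnion f k ∩ f k) ∧ ∃ k' : Fin K, k' < k ∧ prefUnion f k ∩ f k ⊆ f k'

/-- The closed neighborhood of a vertex. -/
def closedNbhd (G : SimpleGraph V) (v : V) : Set V :=
  insert v (G.neighborSet v)


open SimpleGraph

section Tree
variable {α : Type*} [Fintype α] {T : SimpleGraph α}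

lemma path_unique (hT : T.IsTree) {a b : α} {p q : T.Walk a b}
    (hp : p.IsPath) (hq : q.IsPath) : p = q :=
  (hT.existsUnique_path a b).unique hp hq

lemma mem_support_imp_edge (hT : T.IsTree) {a x e : α} {p : T.Walk a x}
    (hp : p.IsPath) (he : T.Adj x e) (hes : e ∈ p.support) : s(e, x) ∈ p.edges := by
  classical
  have hr : (p.dropUntil e hes).IsPath := hp.dropUntil hes
  have hone : (Walk.cons he.symm Walk.nil : T.Walk e x).IsPath := by
    simp [Walk.isPath_def, he.ne']
  have heq := path_unique hT hr hone
  have : s(e, x) ∈ (p.dropUntil e hes).edges := by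
    rw [heq]; simp
  exact Walk.edges_dropUntil_subset p hes this

/-- In a path of a tree ending at `x`, all edges at `x` incident to neighbors
coincide with the last edge. -/
lemma neighbor_eq_of_edges (hT : T.IsTree) {a x : α} {p : T.Walk a x}
    (hp : p.IsPath) {e1 e2 : α} (h1 : s(e1, x) ∈ p.edges) (h2 : s(e2, x) ∈ p.edges) :
    e1 = e2 := by
  classical
  have hax : a ≠ x := by
    rintro rfl
    rw [Walk.isPath_iff_eq_nil] at hp
    subst hp; simp at h1
  obtain ⟨d, hd, q, hq⟩ := Walk.exists_eq_cons_of_ne (fun h => hax h.symm) p.reverse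
  have hq' : p.reverse.IsPath := hp.reverse
  rw [hq, Walk.cons_isPath_iff] at hq'
  have key : ∀ e, s(e, x) ∈ p.edges → e = d := by
    intro e hemem
    have : s(e, x) ∈ p.reverse.edges := by
      rw [Walk.edges_reverse, List.mem_reverse]; exact hemem
    rw [hq, Walk.edges_cons, List.mem_cons] at this
    rcases this with h | h
    · rw [Sym2.eq_swap] at h
      have := (Sym2.congr_right).mp h.symm  -- s(x,d) = s(x,e)?
      -- h : s(x, e) = s(x, d)
      exact Sym2.congr_right.mp h
    · exact absurd (Walk.snd_mem_support_of_mem_edges q h) hq'.2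
  rw [key e1 h1, key e2 h2]

lemma exists_extend (hT : T.IsTree) {c x : α} {p : T.Walk c x}
    (hp : p.IsPath) (hx : ¬ IsLeaf T x) (hnb : ∃ y, T.Adj x y) :
    ∃ e, T.Adj x e ∧ e ∉ p.support := by
  by_contra hcon
  push_neg at hcon
  obtain ⟨y, hy⟩ := hnb
  apply hx
  refine ⟨y, hy, fun b hb => ?_⟩
  have hbe : s(b, x) ∈ p.edges := mem_support_imp_edge hT hp hb (hcon b hb)
  have hye : s(y, x) ∈ p.edges := mem_support_imp_edge hT hp hy (hcon y hy)
  exact neighbor_eq_of_edges hT hp hbe hye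

lemma leaf_beyond (hT : T.IsTree) {D D' : α} (hDD' : T.Adj D D') :
    ∃ (L : α) (p : T.Walk D' L), p.IsPath ∧ D ∉ p.support ∧ IsLeaf T L := by
  classical
  set P : ℕ → Prop := fun n => ∃ (L : α) (p : T.Walk D' L), p.IsPath ∧ D ∉ p.support ∧
    p.length = n with hP
  have h0 : P 0 := ⟨D', Walk.nil, by simp, by simp [hDD'.ne], rfl⟩
  have hPn : P (Nat.findGreatest P (Fintype.card α)) :=
    Nat.findGreatest_spec (Nat.zero_le _) h0
  obtain ⟨L, p, hp, hD, hlen⟩ := hPn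
  refine ⟨L, p, hp, hD, ?_⟩
  by_contra hL
  by_cases hc : D' = L
  · subst hc
    have hnil : p = Walk.nil := Walk.isPath_iff_eq_nil.mp hp
    have hn0 : Nat.findGreatest P (Fintype.card α) = 0 := by rw [← hlen, hnil]; rfl
    have hex : ∃ e, T.Adj D' e ∧ e ≠ D := by
      by_contra h2
      push_neg at h2
      exact hL ⟨D, hDD'.symm, fun b hb => h2 b hb⟩
    obtain ⟨e, he, heD⟩ := hex
    have h1 : P 1 := ⟨e, Walk.cons he Walk.nil, by simp [Walk.isPath_def, he.ne, he.ne'],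
      by simp [heD.symm, hDD'.ne], rfl⟩
    have hcard1 : 0 < Fintype.card α := Fintype.card_pos_iff.mpr ⟨D⟩
    have := Nat.le_findGreatest hcard1 h1
    omega
  · have hnb : ∃ y, T.Adj L y := by
      obtain ⟨d, hd, q, hq⟩ := Walk.exists_eq_cons_of_ne (fun h => hc h.symm) p.reverse
      exact ⟨d, hd⟩
    obtain ⟨e, heL, hes⟩ := exists_extend hT hp hL hnb
    by_cases heD : e = D
    · have hADL : T.Adj D L := heD ▸ heL.symm
      have w1 : (Walk.cons hDD' p).IsPath := hp.cons (by simpa [heD] using hes)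
      have w2 : (Walk.cons hADL Walk.nil : T.Walk D L).IsPath := by
        simp [Walk.isPath_def, hADL.ne, hADL.ne']
      have hpq := path_unique hT w1 w2
      have hlen1 : p.length + 1 = 1 := by
        have := congrArg Walk.length hpq
        simpa using this
      exact hc (Walk.eq_of_length_eq_zero (p := p) (by omega))
    · have hes' : e ∉ p.reverse.support := by
        rwa [Walk.support_reverse, List.mem_reverse]
      have hcons : (Walk.cons heL.symm p.reverse).IsPath := hp.reverse.cons hes'
      have hp' : (Walk.cons heL.symm p.reverse).reverse.IsPath := hcons.reverse
      have hD' : D ∉ (Walk.cons heL.symm p.reverse).reverse.support := by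
        rw [Walk.support_reverse, List.mem_reverse, Walk.support_cons]
        simp only [List.mem_cons]
        rintro (h | h)
        · exact heD h.symm
        · rw [Walk.support_reverse, List.mem_reverse] at h; exact hD h
      have hlenp : (Walk.cons heL.symm p.reverse).reverse.length =
          Nat.findGreatest P (Fintype.card α) + 1 := by
        simp [hlen]
      have hP1 : P (Nat.findGreatest P (Fintype.card α) + 1) := ⟨e, _, hp', hD', hlenp⟩
      have hle : Nat.findGreatest P (Fintype.card α) + 1 ≤ Fintype.card α := by
        have h2 := hp'.length_lt
        omega
      have := Nat.le_findGreatest hle hP1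
      omega

lemma exists_leaf (hT : T.IsTree) (hcard : ∃ a b : α, a ≠ b) :
    ∃ L, IsLeaf T L := by
  obtain ⟨a, b, hab⟩ := hcard
  obtain ⟨w⟩ := hT.isConnected a b
  obtain ⟨c, hc, q, hq⟩ := Walk.exists_eq_cons_of_ne hab w
  obtain ⟨L, p, _, _, hL⟩ := leaf_beyond hT hc
  exact ⟨L, hL⟩


variable [DecidableEq α]

lemma takeUntil_second (hT : T.IsTree) {D D0 x L : α}
    (h0 : T.Adj D D0) {p0 : T.Walk D0 L} (hp0 : p0.IsPath) (hD0 : D ∉ p0.support)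
    (hx : x ∈ (Walk.cons h0 p0).support) (hxD : x ≠ D) :
    ((Walk.cons h0 p0).takeUntil x hx).support.tail.head? = some D0 := by
  have hq : (Walk.cons h0 p0).IsPath := hp0.cons hD0
  set r := (Walk.cons h0 p0).takeUntil x hx with hrdef
  obtain ⟨z, hz, r', hr⟩ := Walk.exists_eq_cons_of_ne (fun h => hxD h.symm) r
  have hhead : r.support.tail.head? = some z := by
    rw [hr, Walk.support_cons, List.tail_cons, Walk.support_eq_cons r']
    rfl
  have hzD0 : z = D0 := by
    have hmem : s(D, z) ∈ r.edges := by rw [hr, Walk.edges_cons]; exact List.mem_cons_self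
    have hmem2 : s(D, z) ∈ (Walk.cons h0 p0).edges := Walk.edges_takeUntil_subset _ hx hmem
    rw [Walk.edges_cons, List.mem_cons] at hmem2
    rcases hmem2 with h | h
    · exact Sym2.congr_right.mp h
    · exact absurd (Walk.fst_mem_support_of_mem_edges p0 h) hD0
  rw [hhead, hzD0]

lemma path_inter (hT : T.IsTree) {D L1 L2 D1 D2 : α}
    (h1 : T.Adj D D1) (h2 : T.Adj D D2) (hne : D1 ≠ D2)
    {p1 : T.Walk D1 L1} {p2 : T.Walk D2 L2} (hp1 : p1.IsPath) (hp2 : p2.IsPath)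
    (hD1 : D ∉ p1.support) (hD2 : D ∉ p2.support) :
    ∀ x, x ∈ (Walk.cons h1 p1).support → x ∈ (Walk.cons h2 p2).support → x = D := by
  intro x hx1 hx2
  by_contra hxD
  have hq1 : (Walk.cons h1 p1).IsPath := hp1.cons hD1
  have hq2 : (Walk.cons h2 p2).IsPath := hp2.cons hD2
  have hr12 := path_unique hT (hq1.takeUntil hx1) (hq2.takeUntil hx2)
  have hh1 := takeUntil_second hT h1 hp1 hD1 hx1 hxD
  have hh2 := takeUntil_second hT h2 hp2 hD2 hx2 hxD
  rw [hr12, hh2] at hh1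
  exact hne (Option.some.inj hh1).symm

lemma leaves_sep (hT : T.IsTree) {D D1 D2 : α}
    (h1 : T.Adj D D1) (h2 : T.Adj D D2) (hne : D1 ≠ D2) :
    ∃ L1 L2, IsLeaf T L1 ∧ IsLeaf T L2 ∧ ∀ (W : T.Walk L1 L2), D ∈ W.support := by
  obtain ⟨L1, p1, hp1, hD1, hl1⟩ := leaf_beyond hT h1
  obtain ⟨L2, p2, hp2, hD2, hl2⟩ := leaf_beyond hT h2
  have hq1 : (Walk.cons h1 p1).IsPath := hp1.cons hD1
  have hq2 : (Walk.cons h2 p2).IsPath := hp2.cons hD2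
  have hint := path_inter hT h1 h2 hne hp1 hp2 hD1 hD2
  set P : T.Walk L1 L2 := (Walk.cons h1 p1).reverse.append (Walk.cons h2 p2) with hPdef
  have hPsupp : P.support = (Walk.cons h1 p1).support.reverse ++ (Walk.cons h2 p2).support.tail := by
    rw [hPdef, Walk.support_append, Walk.support_reverse]
  have hPpath : P.IsPath := by
    rw [Walk.isPath_def, hPsupp]
    refine List.Nodup.append (by rw [List.nodup_reverse]; exact hq1.support_nodup) ?_ ?_
    · exact (List.tail_sublist _).nodup hq2.support_nodup
    · intro x hxl hxr
      rw [List.mem_reverse] at hxl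
      have hxr' : x ∈ (Walk.cons h2 p2).support := by
        rw [Walk.support_cons] at hxr ⊢
        exact List.mem_cons_of_mem _ hxr
      have hxD := hint x hxl hxr'
      subst hxD
      rw [Walk.support_cons, List.tail_cons] at hxr
      exact hD2 hxr
  have hDP : D ∈ P.support := by
    rw [hPsupp]
    refine List.mem_append_left _ ?_
    rw [List.mem_reverse, Walk.support_cons]
    exact List.mem_cons_self
  refine ⟨L1, L2, hl1, hl2, fun W => ?_⟩
  have hbp := path_unique hT hPpath W.bypass_isPath
  exact Walk.support_bypass_subset W (hbp ▸ hDP)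

end Tree

section Graph
variable {V : Type*} [Fintype V] {G : SimpleGraph V} {S : Set V}

lemma exists_maxClique_superset {s : Set V} (hs : G.IsClique s) :
    ∃ C, IsMaxClique G C ∧ s ⊆ C := by
  classical
  obtain ⟨C, hC, hmax⟩ := Set.Finite.exists_maximalFor id {t : Set V | G.IsClique t ∧ s ⊆ t}
    (Set.toFinite _) ⟨s, hs, subset_rfl⟩
  exact ⟨C, ⟨hC.1, fun t ht hsub => hsub.antisymm (hmax ⟨ht, hC.2.trans hsub⟩ hsub)⟩, hC.2⟩

lemma exists_maxClique_mem (v : V) : ∃ C, IsMaxClique G C ∧ v ∈ C := by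
  obtain ⟨C, hC, hsub⟩ := exists_maxClique_superset (G := G) (s := {v}) (Set.pairwise_singleton v G.Adj)
  exact ⟨C, hC, hsub rfl⟩

lemma reach_refl {x : V} (hx : x ∉ S) : ReachWithin G Set.univ S x x :=
  ⟨Walk.nil, by simp [hx]⟩

lemma reach_symm {x y : V} (h : ReachWithin G Set.univ S x y) :
    ReachWithin G Set.univ S y x := by
  obtain ⟨p, hp⟩ := h
  exact ⟨p.reverse, fun z hz => hp z (by rwa [Walk.support_reverse, List.mem_reverse] at hz)⟩

lemma reach_trans {x y z : V} (h1 : ReachWithin G Set.univ S x y)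
    (h2 : ReachWithin G Set.univ S y z) : ReachWithin G Set.univ S x z := by
  obtain ⟨p, hp⟩ := h1
  obtain ⟨q, hq⟩ := h2
  refine ⟨p.append q, fun t ht => ?_⟩
  rw [Walk.mem_support_append_iff] at ht
  rcases ht with ht | ht
  · exact hp t ht
  · exact hq t ht

lemma reach_of_adj {x y : V} (h : G.Adj x y) (hx : x ∉ S) (hy : y ∉ S) :
    ReachWithin G Set.univ S x y := by
  refine ⟨Walk.cons h Walk.nil, fun z hz => ?_⟩
  simp only [Walk.support_cons, Walk.support_nil, List.mem_cons, List.mem_singleton] at hz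
  rcases hz with rfl | hz
  · exact ⟨trivial, hx⟩
  · simp at hz; subst hz; exact ⟨trivial, hy⟩

lemma reach_end_not_mem {x y : V} (h : ReachWithin G Set.univ S x y) : y ∉ S := by
  obtain ⟨p, hp⟩ := h
  exact (hp y p.end_mem_support).2

lemma comp_eq_of_mem {a x : V} (h : ReachWithin G Set.univ S a x) :
    {t | ReachWithin G Set.univ S a t} = {t | ReachWithin G Set.univ S x t} :=
  Set.ext fun t => ⟨fun ht => reach_trans (reach_symm h) ht, fun ht => reach_trans h ht⟩

lemma comp_walk {u0 x1 x2 : V} (h1 : ReachWithin G Set.univ S u0 x1)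
    (h2 : ReachWithin G Set.univ S u0 x2) :
    ∃ p : G.Walk x1 x2, ∀ z ∈ p.support, ReachWithin G Set.univ S u0 z := by
  classical
  obtain ⟨p1, hp1⟩ := h1
  obtain ⟨p2, hp2⟩ := h2
  refine ⟨p1.reverse.append p2, fun z hz => ?_⟩
  rw [Walk.mem_support_append_iff] at hz
  rcases hz with hz | hz
  · rw [Walk.support_reverse, List.mem_reverse] at hz
    exact ⟨p1.takeUntil z hz, fun w hw => hp1 w (Walk.support_takeUntil_subset _ hz hw)⟩
  · exact ⟨p2.takeUntil z hz, fun w hw => hp2 w (Walk.support_takeUntil_subset _ hz hw)⟩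

lemma maxClique_subset_comp {C : Set V} (hC : IsMaxClique G C) {x : V}
    (hx : x ∈ C) (hxS : x ∉ S) :
    C ⊆ {t | ReachWithin G Set.univ S x t} ∪ S := by
  intro y hy
  by_cases hyS : y ∈ S
  · exact Or.inr hyS
  · left
    by_cases hxy : y = x
    · subst hxy; exact reach_refl hyS
    · exact reach_of_adj (hC.1 hx hy (Ne.symm hxy)) hxS hyS

variable {T : SimpleGraph {s : Set V // IsMaxClique G s}}

lemma junction_walk (hTc : IsCliqueTree G T) (C C' : {s : Set V // IsMaxClique G s})
    {v : V} (hv : v ∈ C.val) (hv' : v ∈ C'.val) :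
    ∃ W : T.Walk C C', ∀ E ∈ W.support, v ∈ E.val := by
  classical
  obtain ⟨wlk⟩ := hTc.1.isConnected.preconnected C C'
  exact ⟨wlk.bypass, fun E hE => hTc.2 C C' wlk.bypass wlk.bypass_isPath E hE ⟨hv, hv'⟩⟩

lemma T_walk_meet (hTc : IsCliqueTree G T) (Γ : Set V) :
    ∀ {x x' : V} (p : G.Walk x x'), (∀ z ∈ p.support, z ∈ Γ) →
    ∀ (C C' : {s : Set V // IsMaxClique G s}), x ∈ C.val → x' ∈ C'.val →
    ∃ W : T.Walk C C', ∀ E ∈ W.support, ∃ v, v ∈ E.val ∧ v ∈ Γ := by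
  intro x x' p
  induction p with
  | nil =>
    intro hsupp C C' hx hx'
    obtain ⟨W, hW⟩ := junction_walk hTc C C' hx hx'
    exact ⟨W, fun E hE => ⟨_, hW E hE, hsupp _ (Walk.start_mem_support _)⟩⟩
  | @cons x y x' h q ih =>
    intro hsupp C C' hx hx'
    have hpair : G.IsClique {x, y} := by
      intro a ha b hb hab
      rcases ha with rfl | ha <;> rcases hb with rfl | hb
      · exact absurd rfl hab
      · rw [Set.mem_singleton_iff] at hb; subst hb; exact h
      · rw [Set.mem_singleton_iff] at ha; subst ha; exact h.symm
      · rw [Set.mem_singleton_iff] at ha hb; subst ha; subst hb; exact absurd rfl hab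
    obtain ⟨E, hE, hsub⟩ := exists_maxClique_superset hpair
    have hxE : x ∈ E := hsub (Or.inl rfl)
    have hyE : y ∈ E := hsub (Or.inr rfl)
    obtain ⟨W1, hW1⟩ := junction_walk hTc C ⟨E, hE⟩ hx hxE
    obtain ⟨W2, hW2⟩ := ih (fun z hz => hsupp z (by rw [Walk.support_cons]; exact List.mem_cons_of_mem _ hz))
      ⟨E, hE⟩ C' hyE hx'
    refine ⟨W1.append W2, fun F hF => ?_⟩
    rw [Walk.mem_support_append_iff] at hF
    rcases hF with hF | hF
    · exact ⟨x, hW1 F hF, hsupp x (by rw [Walk.support_cons]; exact List.mem_cons_self)⟩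
    · exact hW2 F hF

end Graph

theorem leaves_meet_two_components {V : Type*} [Fintype V]
    (G : SimpleGraph V) (hconn : G.Connected) (hch : IsChordal G)
    (hnc : ¬ CompleteOn G Set.univ)
    (S : Set V) (hS : IsInclMinSeparator G S)
    (T : SimpleGraph {s : Set V // IsMaxClique G s}) (hT : IsCliqueTree G T) :
    ∃ Γ Γ' : Set V, IsCompOutside G S Γ ∧ IsCompOutside G S Γ' ∧ Γ ≠ Γ' ∧
      (∃ C₁ : {s : Set V // IsMaxClique G s}, IsLeaf T C₁ ∧ C₁.val ⊆ Γ ∪ S) ∧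
      (∃ C₂ : {s : Set V // IsMaxClique G s}, IsLeaf T C₂ ∧ C₂.val ⊆ Γ' ∪ S) := by
  classical
  obtain ⟨hSuniv, u, w, hsep, hmin⟩ := hS.1
  obtain ⟨-, -, huS, hwS, huw, hnreach⟩ := hsep
  set Γu : Set V := {z | ReachWithin G Set.univ S u z} with hΓu_def
  set Γw : Set V := {z | ReachWithin G Set.univ S w z} with hΓw_def
  have hΓu : IsCompOutside G S Γu := ⟨u, huS, rfl⟩
  have hΓw : IsCompOutside G S Γw := ⟨w, hwS, rfl⟩
  have hwΓw : w ∈ Γw := reach_refl hwS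
  have hΓuw : Γu ≠ Γw := by
    intro h
    apply hnreach
    have : w ∈ Γu := by rw [h]; exact hwΓw
    exact this
  -- two distinct maximal cliques
  have hnc' : ∃ a b : V, a ≠ b ∧ ¬ G.Adj a b := by
    by_contra hcon
    push_neg at hcon
    exact hnc fun a _ b _ hab => hcon a b hab
  obtain ⟨a, b, hab, hnadj⟩ := hnc'
  obtain ⟨Ca, hCa, haCa⟩ := exists_maxClique_mem (G := G) a
  obtain ⟨Cb, hCb, hbCb⟩ := exists_maxClique_mem (G := G) b
  have hCab : (⟨Ca, hCa⟩ : {s : Set V // IsMaxClique G s}) ≠ ⟨Cb, hCb⟩ := by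
    intro h
    have : b ∈ Ca := by rw [show Ca = Cb from congrArg Subtype.val h]; exact hbCb
    exact hnadj (hCa.1 haCa this hab)
  obtain ⟨L0, hL0⟩ := exists_leaf hT.1 ⟨_, _, hCab⟩
  by_cases hLS : ∃ L : {s : Set V // IsMaxClique G s}, IsLeaf T L ∧ L.val ⊆ S
  · obtain ⟨L, hleaf, hsub⟩ := hLS
    exact ⟨Γu, Γw, hΓu, hΓw, hΓuw,
      ⟨L, hleaf, hsub.trans Set.subset_union_right⟩,
      ⟨L, hleaf, hsub.trans Set.subset_union_right⟩⟩
  · push_neg at hLS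
    have hL0x : ∃ x0, x0 ∈ L0.val ∧ x0 ∉ S := by
      by_contra hcon
      push_neg at hcon
      exact hLS L0 hL0 hcon
    obtain ⟨x0, hx0L, hx0S⟩ := hL0x
    set Γ : Set V := {z | ReachWithin G Set.univ S x0 z} with hΓ_def
    have hΓ : IsCompOutside G S Γ := ⟨x0, hx0S, rfl⟩
    have hL0sub : L0.val ⊆ Γ ∪ S := maxClique_subset_comp L0.2 hx0L hx0S
    by_cases hall : ∀ L : {s : Set V // IsMaxClique G s}, IsLeaf T L → L.val ⊆ Γ ∪ S
    · exfalso
      -- choose a component distinct from Γ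
      have hzpick : ∃ z : V, z ∉ S ∧ {t | ReachWithin G Set.univ S z t} ≠ Γ := by
        by_cases hcase : Γ = Γu
        · exact ⟨w, hwS, fun h => hΓuw (hcase ▸ h).symm⟩
        · exact ⟨u, huS, fun h => hcase h.symm⟩
      obtain ⟨z, hzS, hΓ''ne⟩ := hzpick
      set Γ'' : Set V := {t | ReachWithin G Set.univ S z t} with hΓ''_def
      have hzΓ'' : z ∈ Γ'' := reach_refl hzS
      obtain ⟨D, hD, hzD⟩ := exists_maxClique_mem (G := G) z
      set DT : {s : Set V // IsMaxClique G s} := ⟨D, hD⟩ with hDT_def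
      -- DT is not a leaf
      have hDnl : ¬ IsLeaf T DT := by
        intro hleaf
        have hzΓS : z ∈ Γ ∪ S := hall DT hleaf hzD
        rcases hzΓS with hzΓ | hzS'
        · exact hΓ''ne (comp_eq_of_mem hzΓ).symm
        · exact hzS hzS'
      -- DT has a neighbor
      have hne2 : ∃ O : {s : Set V // IsMaxClique G s}, O ≠ DT := by
        by_cases hda : DT = ⟨Ca, hCa⟩
        · exact ⟨⟨Cb, hCb⟩, fun h => hCab (hda ▸ h.symm)⟩
        · exact ⟨⟨Ca, hCa⟩, fun h => hda h.symm⟩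
      obtain ⟨O, hO⟩ := hne2
      obtain ⟨wlk⟩ := hT.1.isConnected.preconnected DT O
      obtain ⟨D1, hD1, q, -⟩ := SimpleGraph.Walk.exists_eq_cons_of_ne (Ne.symm hO) wlk
      have hD2 : ∃ D2, T.Adj DT D2 ∧ D2 ≠ D1 := by
        by_contra hcon
        push_neg at hcon
        exact hDnl ⟨D1, hD1, fun b hb => hcon b hb⟩
      obtain ⟨D2, hD2, hD12⟩ := hD2
      obtain ⟨L1, L2, hl1, hl2, hWD⟩ := leaves_sep hT.1 hD2 hD1 hD12
      -- leaves meet Γ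
      have hmeet : ∀ L : {s : Set V // IsMaxClique G s}, IsLeaf T L →
          ∃ xx, xx ∈ L.val ∧ xx ∈ Γ := by
        intro L hleaf
        have hnsub := hLS L hleaf
        have hx : ∃ xx, xx ∈ L.val ∧ xx ∉ S := by
          by_contra hcon
          push_neg at hcon
          exact hnsub hcon
        obtain ⟨xx, hxL, hxS⟩ := hx
        rcases hall L hleaf hxL with hxΓ | hxS'
        · exact ⟨xx, hxL, hxΓ⟩
        · exact absurd hxS' hxS
      obtain ⟨x1, hx1L, hx1Γ⟩ := hmeet L1 hl1
      obtain ⟨x2, hx2L, hx2Γ⟩ := hmeet L2 hl2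
      obtain ⟨p, hp⟩ := comp_walk hx1Γ hx2Γ
      obtain ⟨W, hW⟩ := T_walk_meet hT Γ p hp L1 L2 hx1L hx2L
      obtain ⟨v, hvD, hvΓ⟩ := hW DT (hWD W)
      -- v ∈ D ∩ Γ and z ∈ D ∩ Γ'' force Γ = Γ''
      have hvS : v ∉ S := reach_end_not_mem hvΓ
      have hreach_vz : ReachWithin G Set.univ S v z := by
        by_cases hvz : v = z
        · subst hvz; exact reach_refl hvS
        · exact reach_of_adj (hD.1 hvD hzD hvz) hvS hzS
      apply hΓ''ne
      calc Γ'' = {t | ReachWithin G Set.univ S v t} := (comp_eq_of_mem (reach_symm hreach_vz)).symm ▸ rfl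
        _ = Γ := by rw [hΓ_def, comp_eq_of_mem hvΓ]
    · push_neg at hall
      obtain ⟨L2, hl2, hnsub⟩ := hall
      have hy : ∃ y, y ∈ L2.val ∧ y ∉ Γ ∪ S := by
        by_contra hcon
        push_neg at hcon
        exact hnsub hcon
      obtain ⟨y, hyL2, hyΓS⟩ := hy
      have hyS : y ∉ S := fun h => hyΓS (Or.inr h)
      have hyΓ : y ∉ Γ := fun h => hyΓS (Or.inl h)
      set Γ' : Set V := {t | ReachWithin G Set.univ S y t} with hΓ'_def
      have hΓ' : IsCompOutside G S Γ' := ⟨y, hyS, rfl⟩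
      have hL2sub : L2.val ⊆ Γ' ∪ S := maxClique_subset_comp L2.2 hyL2 hyS
      have hΓΓ' : Γ ≠ Γ' := by
        intro h
        exact hyΓ (h ▸ reach_refl hyS)
      exact ⟨Γ, Γ', hΓ, hΓ', hΓΓ', ⟨L0, hL0, hL0sub⟩, ⟨L2, hl2, hL2sub⟩⟩


end Chordal
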